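/- The coupling associated to a quantum channel (equation (eq:marginals)): let ρ be a density matrix of size n and let B₁, …, B_m : Matrix (Fin n) (Fin n) ℂ satisfy ∑ t, (B_t)ᴴ * B_t = 1. Define Π (i, j) (k, l) = ∑ t, (B_t * √ρ) i j * conj((B_t * √ρ) k l). Then Π is a coupling between ρ and σ, where σ = ∑ t, B_t * ρ * (B_t)ᴴ (in particular σ is a density matrix). -/

import Mathlib

open Matrix
open scoped ComplexOrder

noncomputable section

/-- A density matrix: positive semidefinite with trace 1. -/
def IsDensity {ι : Type*} [Fintype ι] (ρ : Matrix ι ι ℂ) : Prop :=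
  ρ.PosSemidef ∧ ρ.trace = 1

/-- A coupling between the quantum states `ρ` and `σ`. -/
def IsCoupling {ι : Type*} [Fintype ι] (ρ σ : Matrix ι ι ℂ)
    (P : Matrix (ι × ι) (ι × ι) ℂ) : Prop :=
  P.PosSemidef ∧ P.trace = 1 ∧
  (∀ j l, ∑ i, P (i, j) (i, l) = ρ l j) ∧
  (∀ i k, ∑ j, P (i, j) (k, j) = σ i k)

/-- The cost operator `C = ∑ s, (Rₛ ⊗ I − I ⊗ Rₛᵀ)²` associated to a family of
Hermitian matrices. -/
def costOp {ι : Type*} [Fintype ι] [DecidableEq ι] {κ : Type*} [Fintype κ]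
    (R : κ → Matrix ι ι ℂ) : Matrix (ι × ι) (ι × ι) ℂ :=
  ∑ s, (Matrix.of (fun p q : ι × ι =>
      R s p.1 q.1 * (if p.2 = q.2 then 1 else 0)
      - (if p.1 = q.1 then 1 else 0) * R s q.2 p.2)) ^ 2

/-- The square root of a positive semidefinite matrix (as defined in Mathlib of December 2024,
since removed from Mathlib). -/
def Matrix.PosSemidef.sqrt {𝕜 : Type*} [RCLike 𝕜] {ι : Type*} [Fintype ι] [DecidableEq ι]
    {A : Matrix ι ι 𝕜} (hA : A.PosSemidef) : Matrix ι ι 𝕜 :=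
  hA.1.eigenvectorUnitary.1 * diagonal ((↑) ∘ (√·) ∘ hA.1.eigenvalues) *
    (star hA.1.eigenvectorUnitary : Matrix ι ι 𝕜)

theorem psd_sqrt_conjTranspose_aux {ι : Type*} [Fintype ι] [DecidableEq ι]
    {A : Matrix ι ι ℂ} (hA : A.PosSemidef) : (hA.sqrt)ᴴ = hA.sqrt := by
  unfold Matrix.PosSemidef.sqrt
  simp only [conjTranspose_mul, diagonal_conjTranspose, Matrix.mul_assoc]
  rw [← star_eq_conjTranspose, ← star_eq_conjTranspose, star_star]
  congr 2
  congr 1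
  funext i
  simp [Complex.conj_ofReal]

theorem psd_sqrt_mul_self_aux {ι : Type*} [Fintype ι] [DecidableEq ι]
    {A : Matrix ι ι ℂ} (hA : A.PosSemidef) : hA.sqrt * hA.sqrt = A := by
  unfold Matrix.PosSemidef.sqrt
  conv_rhs => rw [hA.1.spectral_theorem, Unitary.conjStarAlgAut_apply]
  have hU : (star hA.1.eigenvectorUnitary : Matrix ι ι ℂ) * hA.1.eigenvectorUnitary.1 = 1 :=
    Unitary.coe_star_mul_self _
  simp only [Matrix.mul_assoc]
  congr 1
  rw [← Matrix.mul_assoc (star _), hU, Matrix.one_mul, ← Matrix.mul_assoc, diagonal_mul_diagonal]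
  congr 2
  ext i
  simp only [Function.comp_apply]
  rw [← RCLike.ofReal_mul, Real.mul_self_sqrt (hA.eigenvalues_nonneg i)]

/-- **The coupling associated to a quantum channel** (equation (eq:marginals)):
given Kraus operators `B_t` with `∑ t, (B_t)ᴴ B_t = 1`, the state
`Π (i,j) (k,l) = ∑ t, (B_t √ρ) i j * conj((B_t √ρ) k l)` is a coupling between `ρ`
and `σ = ∑ t, B_t ρ (B_t)ᴴ`, which is a density matrix. -/
theorem channel_induces_coupling {n m : ℕ}
    (ρ : Matrix (Fin n) (Fin n) ℂ) (hρ : IsDensity ρ)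
    (B : Fin m → Matrix (Fin n) (Fin n) ℂ) (hB : ∑ t, (B t)ᴴ * B t = 1) :
    IsDensity (∑ t, B t * ρ * (B t)ᴴ) ∧
    IsCoupling ρ (∑ t, B t * ρ * (B t)ᴴ)
      (Matrix.of fun p q : Fin n × Fin n =>
        ∑ t, (B t * hρ.1.sqrt) p.1 p.2 * (starRingEnd ℂ) ((B t * hρ.1.sqrt) q.1 q.2)) := by
  obtain ⟨hρpsd, hρtr⟩ := hρ
  set s := hρpsd.sqrt with hs
  have hsherm : sᴴ = s := psd_sqrt_conjTranspose_aux hρpsd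
  have hss : s * s = ρ := psd_sqrt_mul_self_aux hρpsd
  set A : Fin m → Matrix (Fin n) (Fin n) ℂ := fun t => B t * s with hA
  -- key identity : ∑ t, A tᴴ * A t = ρ
  have key : ∑ t, (A t)ᴴ * A t = ρ := by
    have : ∑ t, (A t)ᴴ * A t = s * (∑ t, (B t)ᴴ * B t) * s := by
      simp only [hA, conjTranspose_mul, hsherm, Finset.mul_sum, Finset.sum_mul]
      exact Finset.sum_congr rfl fun t _ => by simp only [Matrix.mul_assoc]
    rw [this, hB, mul_one, hss]
  have key2 : ∀ t, A t * (A t)ᴴ = B t * ρ * (B t)ᴴ := by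
    intro t
    simp only [hA, conjTranspose_mul, hsherm, ← hss, Matrix.mul_assoc]
  set P : Matrix (Fin n × Fin n) (Fin n × Fin n) ℂ :=
    Matrix.of fun p q : Fin n × Fin n =>
      ∑ t, (A t) p.1 p.2 * (starRingEnd ℂ) ((A t) q.1 q.2) with hP
  -- marginal 1
  have marg1 : ∀ j l, ∑ i, P (i, j) (i, l) = ρ l j := by
    intro j l
    have : ∑ i, P (i, j) (i, l) = (∑ t, (A t)ᴴ * A t) l j := by
      simp only [hP, Matrix.of_apply, Matrix.sum_apply, Matrix.mul_apply,
        Matrix.conjTranspose_apply, RCLike.star_def]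
      rw [Finset.sum_comm]
      exact Finset.sum_congr rfl fun t _ => Finset.sum_congr rfl fun i _ => by ring
    rw [this, key]
  -- marginal 2
  have marg2 : ∀ i k, ∑ j, P (i, j) (k, j) = (∑ t, B t * ρ * (B t)ᴴ) i k := by
    intro i k
    have : ∑ j, P (i, j) (k, j) = (∑ t, A t * (A t)ᴴ) i k := by
      simp only [hP, Matrix.of_apply, Matrix.sum_apply, Matrix.mul_apply,
        Matrix.conjTranspose_apply, RCLike.star_def]
      rw [Finset.sum_comm]
    rw [this]
    simp only [key2]
  -- P is PSD
  have hPpsd : P.PosSemidef := by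
    have : P = ∑ t, (Matrix.of fun (p : Fin n × Fin n) (_ : Unit) => (A t) p.1 p.2) *
        (Matrix.of fun (p : Fin n × Fin n) (_ : Unit) => (A t) p.1 p.2)ᴴ := by
      ext p q
      simp [hP, Matrix.sum_apply, Matrix.mul_apply, Matrix.conjTranspose_apply]
    rw [this]
    apply Finset.sum_induction _ _ (fun a b => Matrix.PosSemidef.add) Matrix.PosSemidef.zero
    intro t _
    exact Matrix.posSemidef_self_mul_conjTranspose _
  -- trace P
  have hPtr : P.trace = 1 := by
    have : P.trace = ∑ j, ∑ i, P (i, j) (i, j) := by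
      simp only [Matrix.trace, Matrix.diag, Fintype.sum_prod_type]
      rw [Finset.sum_comm]
    rw [this]
    simp only [marg1]
    simpa [Matrix.trace, Matrix.diag] using hρtr
  -- σ is a density matrix
  have hσpsd : (∑ t, B t * ρ * (B t)ᴴ).PosSemidef := by
    apply Finset.sum_induction _ _ (fun a b => Matrix.PosSemidef.add) Matrix.PosSemidef.zero
    intro t _
    exact hρpsd.mul_mul_conjTranspose_same (B t)
  have hσtr : (∑ t, B t * ρ * (B t)ᴴ).trace = 1 := by
    rw [Matrix.trace_sum]
    have : ∀ t, (B t * ρ * (B t)ᴴ).trace = ((B t)ᴴ * B t * ρ).trace := by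
      intro t
      rw [Matrix.trace_mul_cycle]
    simp_rw [this]
    rw [← Matrix.trace_sum, ← Finset.sum_mul, hB, one_mul, hρtr]
  exact ⟨⟨hσpsd, hσtr⟩, hPpsd, hPtr, marg1, marg2⟩
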